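/- Let Σ ⊆ ℝ^d be a compact convex set containing 0, with intrinsic ball condition: there exist 0 < r ≤ R < ∞ such that B(0,r) ∩ aff(Σ) ⊆ Σ ⊆ B(0,R). Then for every boundary point x of Σ (relative to aff(Σ)) and every ε ∈ (0,1), the s-dimensional Hausdorff measure of B(x,ε) ∩ Σ is at least κ_s (min(r,1)/(2 max(R+r,1)))^s ε^s, where s = dim aff(Σ) and κ_s is the volume of the unit ball in ℝ^s. -/

import Mathlib

open MeasureTheory

open Metric Set in
open scoped ENNReal NNReal in
theorem vol_le_hausdorff (n : ℕ) :
    (volume : Measure (EuclideanSpace ℝ (Fin n))) ≤ (μH[(n : ℝ)] : Measure (EuclideanSpace ℝ (Fin n))) := by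
  refine MeasureTheory.Measure.le_hausdorffMeasure _ _ ∞ (by simp) (fun t _ => ?_)
  rw [ENNReal.rpow_natCast]
  set eqv := (MeasurableEquiv.toLp 2 (Fin n → ℝ)).symm
  have hpres := EuclideanSpace.volume_preserving_symm_measurableEquiv_toLp (Fin n)
  have h1 : (volume : Measure (EuclideanSpace ℝ (Fin n))) t
      = volume (eqv.symm ⁻¹' t) := by
    conv_lhs => rw [← (hpres.symm eqv).map_eq]
    rw [MeasurableEquiv.map_apply]
  rw [h1]
  have h2 : eqv.symm ⁻¹' t = eqv '' t := by
    rw [MeasurableEquiv.image_eq_preimage_symm]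
  rw [h2]
  calc volume ((eqv : EuclideanSpace ℝ (Fin n) → (Fin n → ℝ)) '' t)
      ≤ EMetric.diam ((eqv : EuclideanSpace ℝ (Fin n) → (Fin n → ℝ)) '' t) ^ Fintype.card (Fin n) :=
        Real.volume_pi_le_diam_pow _
    _ ≤ EMetric.diam t ^ n := by
        rw [Fintype.card_fin]
        refine pow_le_pow_left' ?_ n
        have : LipschitzWith 1 (eqv : EuclideanSpace ℝ (Fin n) → (Fin n → ℝ)) := by
          exact PiLp.lipschitzWith_ofLp 2 _
        have h := this.ediam_image_le t
        simp only [ENNReal.coe_one, one_mul] at h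
        exact h

theorem stmt_15 {d : ℕ} (S : Set (EuclideanSpace ℝ (Fin d)))
    (hS : IsCompact S) (hconv : Convex ℝ S)
    (h0 : (0 : EuclideanSpace ℝ (Fin d)) ∈ S)
    (r R : ℝ) (hr : 0 < r) (hrR : r ≤ R)
    (hball : Metric.ball (0 : EuclideanSpace ℝ (Fin d)) r ∩
      (affineSpan ℝ S : Set (EuclideanSpace ℝ (Fin d))) ⊆ S)
    (hbound : S ⊆ Metric.closedBall (0 : EuclideanSpace ℝ (Fin d)) R)
    (x : EuclideanSpace ℝ (Fin d)) (hx : x ∈ S)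
    (hxbdry : ∀ ε > 0, ¬ (Metric.ball x ε ∩
      (affineSpan ℝ S : Set (EuclideanSpace ℝ (Fin d))) ⊆ S))
    (ε : ℝ) (hε0 : 0 < ε) (hε1 : ε < 1)
    (s : ℕ) (hs : s = Module.finrank ℝ (affineSpan ℝ S).direction) :
    volume (Metric.ball (0 : EuclideanSpace ℝ (Fin s)) 1) *
        ENNReal.ofReal ((min r 1 / (2 * max (R + r) 1)) ^ s * ε ^ s) ≤
      μH[(s : ℝ)] (Metric.ball x ε ∩ S) := by
  classical
  set V := (affineSpan ℝ S).direction with hV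
  have hspan0 : (0 : EuclideanSpace ℝ (Fin d)) ∈ affineSpan ℝ S := subset_affineSpan ℝ S h0
  have hmemV : ∀ z : EuclideanSpace ℝ (Fin d),
      z ∈ V → z ∈ (affineSpan ℝ S : Set (EuclideanSpace ℝ (Fin d))) := by
    intro z hz
    have := AffineSubspace.vadd_mem_of_mem_direction hz hspan0
    simpa using this
  set m := min r 1 with hm_def
  set M := max (R + r) 1 with hM_def
  have hm0 : 0 < m := lt_min hr one_pos
  have hmr : m ≤ r := min_le_left _ _
  have hM1 : (1 : ℝ) ≤ M := le_max_right _ _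
  have hM0 : (0 : ℝ) < M := lt_of_lt_of_le one_pos hM1
  have hRrM : R + r ≤ M := le_max_left _ _
  set δ := ε / (2 * M) with hδ_def
  have hδ0 : 0 < δ := div_pos hε0 (by positivity)
  have hδ1 : δ < 1 := by
    rw [hδ_def, div_lt_one (by positivity)]
    nlinarith
  have hδM : δ * M = ε / 2 := by
    rw [hδ_def]
    field_simp
  set ρ := δ * m with hρ_def
  have hρ0 : 0 < ρ := mul_pos hδ0 hm0
  have hfr : Module.finrank ℝ V = s := hs.symm
  let b : OrthonormalBasis (Fin s) ℝ V :=
    (stdOrthonormalBasis ℝ V).reindex (finCongr hfr)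
  let f : EuclideanSpace ℝ (Fin s) →ₗᵢ[ℝ] EuclideanSpace ℝ (Fin d) :=
    V.subtypeₗᵢ.comp b.repr.symm.toLinearIsometry
  have hf_mem : ∀ w, f w ∈ V := fun w => (b.repr.symm w).2
  have hf_norm : ∀ w, ‖f w‖ = ‖w‖ := fun w => f.norm_map w
  set g : EuclideanSpace ℝ (Fin s) → EuclideanSpace ℝ (Fin d) :=
    fun w => ((1 - δ) • x) + f w with hg_def
  have hg_isom : Isometry g := by
    have h1 : Isometry (fun y : EuclideanSpace ℝ (Fin d) => ((1 - δ) • x) + y) :=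
      Isometry.of_dist_eq (by intro a b; simp [dist_eq_norm])
    exact h1.comp f.isometry
  have hincl : g '' Metric.ball 0 ρ ⊆ Metric.ball x ε ∩ S := by
    rintro _ ⟨w, hw, rfl⟩
    rw [Metric.mem_ball, dist_zero_right] at hw
    have hxR : ‖x‖ ≤ R := by
      have := hbound hx
      rwa [Metric.mem_closedBall, dist_zero_right] at this
    have hfwρ : ‖f w‖ < ρ := by rw [hf_norm]; exact hw
    constructor
    · rw [Metric.mem_ball, dist_eq_norm]
      have heq : g w - x = f w - δ • x := by
        rw [hg_def]; simp only; rw [sub_smul, one_smul]; abel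
      rw [heq]
      calc ‖f w - δ • x‖ ≤ ‖f w‖ + ‖δ • x‖ := norm_sub_le _ _
        _ ≤ ρ + δ * R := by
            rw [norm_smul, Real.norm_eq_abs, abs_of_pos hδ0]
            have := mul_le_mul_of_nonneg_left hxR hδ0.le
            linarith
        _ = δ * (m + R) := by rw [hρ_def]; ring
        _ ≤ δ * M := by
            have h2 : m + R ≤ M := by linarith
            exact mul_le_mul_of_nonneg_left h2 hδ0.le
        _ = ε / 2 := hδM
        _ < ε := by linarith
    · set z : EuclideanSpace ℝ (Fin d) := δ⁻¹ • f w with hz_def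
      have hzV : z ∈ V := Submodule.smul_mem _ _ (hf_mem w)
      have hznorm : ‖z‖ < m := by
        rw [hz_def, norm_smul, Real.norm_eq_abs, abs_of_pos (inv_pos.2 hδ0)]
        rw [hρ_def] at hfwρ
        calc δ⁻¹ * ‖f w‖ < δ⁻¹ * (δ * m) :=
              mul_lt_mul_of_pos_left hfwρ (inv_pos.2 hδ0)
          _ = m := by field_simp
      have hzS : z ∈ S := by
        apply hball
        refine ⟨?_, hmemV z hzV⟩
        rw [Metric.mem_ball, dist_zero_right]
        exact lt_of_lt_of_le hznorm hmr
      have heq : g w = (1 - δ) • x + δ • z := by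
        rw [hg_def, hz_def]; simp only
        rw [smul_inv_smul₀ hδ0.ne']
      rw [heq]
      exact hconv hx hzS (by linarith) hδ0.le (by ring)
  have key : volume (Metric.ball (0 : EuclideanSpace ℝ (Fin s)) ρ) ≤
      μH[(s : ℝ)] (Metric.ball x ε ∩ S) := by
    calc volume (Metric.ball (0 : EuclideanSpace ℝ (Fin s)) ρ)
        ≤ μH[(s : ℝ)] (Metric.ball (0 : EuclideanSpace ℝ (Fin s)) ρ) :=
          MeasureTheory.Measure.le_iff'.1 (vol_le_hausdorff s) _
      _ = μH[(s : ℝ)] (g '' Metric.ball 0 ρ) :=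
          (hg_isom.hausdorffMeasure_image (Or.inl (by positivity)) _).symm
      _ ≤ μH[(s : ℝ)] (Metric.ball x ε ∩ S) := measure_mono hincl
  refine le_trans (le_of_eq ?_) key
  by_cases hs0 : s = 0
  · subst hs0
    simp only [pow_zero, one_mul, ENNReal.ofReal_one, mul_one]
    have hball_univ : ∀ t : ℝ, 0 < t →
        Metric.ball (0 : EuclideanSpace ℝ (Fin 0)) t = Set.univ := by
      intro t ht
      ext y
      simp only [Metric.mem_ball, Set.mem_univ, iff_true]
      have : y = 0 := Subsingleton.elim _ _
      simp [this, ht]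
    rw [hball_univ 1 one_pos, hball_univ ρ hρ0]
  · have hnt : Nontrivial (EuclideanSpace ℝ (Fin s)) :=
      Module.nontrivial_of_finrank_pos (R := ℝ)
        (by rw [finrank_euclideanSpace_fin]; exact Nat.pos_of_ne_zero hs0)
    rw [MeasureTheory.Measure.addHaar_ball _ _ hρ0.le, finrank_euclideanSpace_fin, mul_comm]
    congr 1
    rw [hρ_def, hδ_def, ← mul_pow]
    congr 1
    rw [hm_def, hM_def]
    ring
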